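/- Let R be a 3-row graph with s columns and R_C eulerian, and let f be the vertex 3-coloring with f(v_{ij}) = i. If R has a symmetric parity-coloring, then f extends to an amiable coloring (f,g) of R. -/

import Mathlib

/-! A 3-row graph with `s` columns is a simple graph on `Fin 3 × Fin s`
(vertex `(i, j)` lies in row `i` and column `j`) whose columns are independent. -/

/-- Every column is an independent set. -/
def ColIndep {s : ℕ} (R : SimpleGraph (Fin 3 × Fin s)) : Prop :=
  ∀ i i' j, ¬ R.Adj (i, j) (i', j)

/-- `d_c(v, R)`: the number of edges of color `c` (under the edge coloring `g`)
incident with `v`. -/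
noncomputable def dColor {s : ℕ} (R : SimpleGraph (Fin 3 × Fin s))
    (g : Sym2 (Fin 3 × Fin s) → Fin 3) (c : Fin 3) (v : Fin 3 × Fin s) : ℕ :=
  {w | R.Adj v w ∧ g s(v, w) = c}.ncard

/-- An amiable coloring of a 3-row graph: a vertex 3-coloring `f` and an edge
3-coloring `g` such that (i) `f` is injective on every column, (ii) no edge has
the color of one of its endpoints, (iii) for every color `c` and column `j`,
`d_c(v₀ⱼ) + d_c(v₁ⱼ) + d_c(v₂ⱼ)` is even. -/
def Amiable {s : ℕ} (R : SimpleGraph (Fin 3 × Fin s))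
    (f : Fin 3 × Fin s → Fin 3) (g : Sym2 (Fin 3 × Fin s) → Fin 3) : Prop :=
  (∀ j, Function.Injective (fun i : Fin 3 => f (i, j))) ∧
  (∀ v w, R.Adj v w → f v ≠ g s(v, w)) ∧
  (∀ c : Fin 3, ∀ j,
    Even (dColor R g c (0, j) + dColor R g c (1, j) + dColor R g c (2, j)))

/-- `R_C` (the multigraph obtained by identifying each column to one vertex) is
eulerian: the degree of each column, i.e. the sum of the degrees of its three
vertices (columns being independent), is even. -/
def EulerianRC {s : ℕ} (R : SimpleGraph (Fin 3 × Fin s)) : Prop :=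
  ∀ j, Even ((R.neighborSet (0, j)).ncard + (R.neighborSet (1, j)).ncard +
    (R.neighborSet (2, j)).ncard)

/-- The `i`-th row. -/
def rowSet (s : ℕ) (i : Fin 3) : Set (Fin 3 × Fin s) := {v | v.1 = i}

/-- `d(v, R[V_a ∪ V_b])`: the degree of `v` in the subgraph induced by rows `a`, `b`. -/
noncomputable def dRows {s : ℕ} (R : SimpleGraph (Fin 3 × Fin s)) (a b : Fin 3)
    (v : Fin 3 × Fin s) : ℕ :=
  {w | R.Adj v w ∧ (w.1 = a ∨ w.1 = b)}.ncard

/-- `|N(v) ∩ V_a|`: the number of neighbours of `v` in row `a`. -/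
noncomputable def nRow {s : ℕ} (R : SimpleGraph (Fin 3 × Fin s)) (a : Fin 3)
    (v : Fin 3 × Fin s) : ℕ :=
  {w | R.Adj v w ∧ w.1 = a}.ncard

/-- A symmetric parity-coloring: a black/white coloring `φ` (`true` = black) with
(i) `φ(v₀ⱼ) = φ(v₁ⱼ)` iff `d(v₀ⱼ, R[V₁ ∪ V₂]) ≡ |N(v₁ⱼ) ∩ V₁| (mod 2)`,
(ii) `φ(v₁ⱼ) = φ(v₂ⱼ)` iff `d(v₁ⱼ, R[V₂ ∪ V₃]) ≡ |N(v₂ⱼ) ∩ V₂| (mod 2)`,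
(iii) every component of every row has an even number of black vertices.
(Here rows are indexed `0,1,2` instead of the paper's `1,2,3`.) -/
def SymParity {s : ℕ} (R : SimpleGraph (Fin 3 × Fin s))
    (φ : Fin 3 × Fin s → Bool) : Prop :=
  (∀ j, (φ (0, j) = φ (1, j)) ↔ Even (dRows R 0 1 (0, j) + nRow R 0 (1, j))) ∧
  (∀ j, (φ (1, j) = φ (2, j)) ↔ Even (dRows R 1 2 (1, j) + nRow R 1 (2, j))) ∧
  (∀ i : Fin 3, ∀ K : (R.induce (rowSet s i)).ConnectedComponent,
    Even ({u : rowSet s i | u ∈ K.supp ∧ φ u.val = true}.ncard))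

open scoped symmDiff

lemma card_symmDiff_mod_two {α : Type*} [DecidableEq α] (s t : Finset α) :
    (s ∆ t).card % 2 = (s.card + t.card) % 2 := by
  have h1 : s ∆ t = (s \ t) ∪ (t \ s) := symmDiff_def s t
  have hd : Disjoint (s \ t) (t \ s) := by
    simp [Finset.disjoint_left, Finset.mem_sdiff]; tauto
  have h2 := Finset.card_sdiff_add_card_inter s t
  have h3 := Finset.card_sdiff_add_card_inter t s
  have h4 : (s ∩ t).card = (t ∩ s).card := by rw [Finset.inter_comm]
  rw [h1, Finset.card_union_of_disjoint hd]
  omega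

lemma filter_symmDiff' {α : Type*} [DecidableEq α] (s t : Finset α) (p : α → Prop)
    [DecidablePred p] : (s ∆ t).filter p = (s.filter p) ∆ (t.filter p) := by
  ext x; simp [Finset.mem_symmDiff, Finset.mem_filter]; tauto

lemma exists_tjoin {V : Type*} [Fintype V] [DecidableEq V] (G : SimpleGraph V) :
    ∀ n (t : V → Bool), {v | t v = true}.ncard = n →
    (∀ K : G.ConnectedComponent, Even {v | G.connectedComponentMk v = K ∧ t v = true}.ncard) →
    ∃ S : Finset (Sym2 V), (↑S ⊆ G.edgeSet) ∧
      ∀ v, (Odd (S.filter (fun e => v ∈ e)).card ↔ t v = true) := by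
  intro n
  induction n using Nat.strong_induction_on with
  | _ n ih =>
    intro t hn hK
    by_cases hex : ∃ u, t u = true
    · obtain ⟨u, hu⟩ := hex
      set K0 := G.connectedComponentMk u with hK0
      set A : Set V := {v | G.connectedComponentMk v = K0 ∧ t v = true} with hAdef
      have hA : u ∈ A := ⟨rfl, hu⟩
      obtain ⟨w, hwA, hwu⟩ : ∃ w ∈ A, w ≠ u := by
        by_contra hcon
        push_neg at hcon
        have hsing : A = {u} := Set.eq_singleton_iff_unique_mem.mpr ⟨hA, fun x hx => hcon x hx⟩
        have := hK K0
        rw [← hAdef, hsing, Set.ncard_singleton] at this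
        exact (Nat.not_even_iff_odd.mpr odd_one) this
      have hr : G.Reachable w u := SimpleGraph.ConnectedComponent.exact hwA.1
      classical
      obtain ⟨p⟩ := hr
      set q := p.toPath with hq
      have ht : (q : G.Walk w u).IsTrail := q.2.isTrail
      set P : Finset (Sym2 V) := ht.edgesFinset with hPdef
      -- parity of P's incidences
      have hPpar : ∀ x, ((P.filter (fun e => x ∈ e)).card % 2 = 1 ↔ (x = w ∨ x = u)) := by
        intro x
        have hcount : (P.filter (fun e => x ∈ e)).card
            = (q : G.Walk w u).edges.countP (fun e => decide (x ∈ e)) := by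
          simp [hPdef, SimpleGraph.Walk.IsTrail.edgesFinset, Finset.filter, Finset.card,
            List.countP_eq_length_filter]
        have heven := ht.even_countP_edges_iff x
        rw [hcount, ← Nat.odd_iff, ← Nat.not_even_iff_odd, heven]
        simp only [ne_eq, hwu, not_false_iff, forall_true_left, true_implies]
        tauto
      -- the modified target function
      set t' : V → Bool := fun v => if v = u ∨ v = w then false else t v with ht'
      have ht'set : {v | t' v = true} = {v | t v = true} \ {u, w} := by
        ext v
        by_cases h : v = u ∨ v = w <;>
          simp [ht', h, Set.mem_diff, Set.mem_insert_iff, Set.mem_singleton_iff] <;> tauto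
      have hsub : ({u, w} : Set V) ⊆ {v | t v = true} := by
        rintro x (rfl | rfl)
        · exact hu
        · exact hwA.2
      have hpair : ({u, w} : Set V).ncard = 2 := Set.ncard_pair (Ne.symm hwu)
      have hge : 2 ≤ n := by
        rw [← hn, ← hpair]
        exact Set.ncard_le_ncard hsub (Set.toFinite _)
      have hn' : {v | t' v = true}.ncard = n - 2 := by
        rw [ht'set, Set.ncard_diff hsub (Set.toFinite _), hpair, hn]
      have hK' : ∀ K : G.ConnectedComponent,
          Even {v | G.connectedComponentMk v = K ∧ t' v = true}.ncard := by
        intro K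
        have hset : {v | G.connectedComponentMk v = K ∧ t' v = true}
            = {v | G.connectedComponentMk v = K ∧ t v = true} \ ({u, w} : Set V) := by
          ext v
          by_cases h : v = u ∨ v = w <;>
            simp [ht', h, Set.mem_diff, Set.mem_insert_iff, Set.mem_singleton_iff] <;> tauto
        rw [hset]
        by_cases hKK : K = K0
        · subst hKK
          have hsub2 : ({u, w} : Set V) ⊆ {v | G.connectedComponentMk v = K0 ∧ t v = true} := by
            rintro x (rfl | rfl)
            · exact hA
            · exact hwA
          rw [Set.ncard_diff hsub2 (Set.toFinite _), hpair]
          have h1 := hK K0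
          have h2 : 2 ≤ {v | G.connectedComponentMk v = K0 ∧ t v = true}.ncard := by
            rw [← hpair]; exact Set.ncard_le_ncard hsub2 (Set.toFinite _)
          rw [Nat.even_iff] at h1 ⊢
          omega
        · have : {v | G.connectedComponentMk v = K ∧ t v = true} \ ({u, w} : Set V)
              = {v | G.connectedComponentMk v = K ∧ t v = true} := by
            ext x
            simp only [Set.mem_diff, Set.mem_setOf_eq, Set.mem_insert_iff,
              Set.mem_singleton_iff, and_iff_left_iff_imp]
            rintro ⟨hx1, _⟩ (rfl | rfl)
            · exact hKK (hK0.trans hx1).symm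
            · exact hKK (hx1.symm.trans hwA.1)
          rw [this]
          exact hK K
        done
      obtain ⟨S', hS'sub, hS'deg⟩ := ih (n - 2) (by omega) t' hn' hK'
      refine ⟨S' ∆ P, ?_, ?_⟩
      · intro e he
        rcases Finset.mem_symmDiff.mp he with ⟨h1, _⟩ | ⟨h1, _⟩
        · exact hS'sub h1
        · exact (q : G.Walk w u).edges_subset_edgeSet (by simpa [hPdef, SimpleGraph.Walk.IsTrail.edgesFinset, ← Finset.mem_val] using h1)
      · intro v
        have hsplit : ((S' ∆ P).filter (fun e => v ∈ e)).card % 2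
            = ((S'.filter (fun e => v ∈ e)).card + (P.filter (fun e => v ∈ e)).card) % 2 := by
          rw [filter_symmDiff']; exact card_symmDiff_mod_two _ _
        rw [Nat.odd_iff, hsplit]
        have hS'v := hS'deg v
        rw [Nat.odd_iff] at hS'v
        have hPv := hPpar v
        by_cases hvu : v = u
        · subst hvu
          have : t' v = false := by simp [ht']
          have h1 : ¬ (S'.filter (fun e => v ∈ e)).card % 2 = 1 := by
            rw [hS'v, this]; simp
          have h2 : (P.filter (fun e => v ∈ e)).card % 2 = 1 := hPv.mpr (Or.inr rfl)
          simp only [hu, iff_true]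
          omega
        · by_cases hvw : v = w
          · subst hvw
            have : t' v = false := by simp [ht']
            have h1 : ¬ (S'.filter (fun e => v ∈ e)).card % 2 = 1 := by
              rw [hS'v, this]; simp
            have h2 : (P.filter (fun e => v ∈ e)).card % 2 = 1 := hPv.mpr (Or.inl rfl)
            simp only [hwA.2, iff_true]
            omega
          · have : t' v = t v := by simp [ht', hvu, hvw]
            have h2 : ¬ (P.filter (fun e => v ∈ e)).card % 2 = 1 := by
              rw [hPv]; tauto
            rw [this] at hS'v
            rw [← hS'v]
            omega
    · push_neg at hex
      refine ⟨∅, by simp, fun v => ?_⟩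
      simp [hex v]


lemma ncard_incidence {V : Type*} [Fintype V] [DecidableEq V]
    (E : Finset (Sym2 V)) (v : V) :
    {w | s(v, w) ∈ E}.ncard = (E.filter (fun e => v ∈ e)).card := by
  have hinj : Set.InjOn (fun w => s(v, w)) {w | s(v, w) ∈ E} :=
    fun w1 _ w2 _ h => Sym2.congr_right.mp h
  have himg : (fun w => s(v, w)) '' {w | s(v, w) ∈ E} = ↑(E.filter (fun e => v ∈ e)) := by
    ext e
    simp only [Set.mem_image, Set.mem_setOf_eq, Finset.coe_filter, Finset.mem_filter]
    constructor
    · rintro ⟨w, hw, rfl⟩; exact ⟨hw, Sym2.mem_mk_left v w⟩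
    · rintro ⟨he, hv⟩
      exact ⟨Sym2.Mem.other hv, by rw [Sym2.other_spec hv]; exact he, Sym2.other_spec hv⟩
  calc {w | s(v, w) ∈ E}.ncard = ((fun w => s(v, w)) '' {w | s(v, w) ∈ E}).ncard :=
        (Set.ncard_image_of_injOn hinj).symm
    _ = _ := by rw [himg, Set.ncard_coe_finset]

lemma exists_rowjoin {s : ℕ} (R : SimpleGraph (Fin 3 × Fin s)) (φ : Fin 3 × Fin s → Bool)
    (h3 : ∀ i : Fin 3, ∀ K : (R.induce (rowSet s i)).ConnectedComponent,
      Even ({u : rowSet s i | u ∈ K.supp ∧ φ u.val = true}.ncard)) (i : Fin 3) :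
    ∃ S' : Finset (Sym2 (Fin 3 × Fin s)),
      (∀ e ∈ S', e ∈ R.edgeSet ∧ ∀ x ∈ e, x.1 = i) ∧
      (∀ j, (Odd ((S'.filter (fun e => ((i, j) : Fin 3 × Fin s) ∈ e)).card) ↔ φ (i, j) = true)) := by
  classical
  haveI : Fintype ↥(rowSet s i) := Fintype.ofFinite _
  obtain ⟨S, hSsub, hSdeg⟩ := exists_tjoin (R.induce (rowSet s i))
      ({v : rowSet s i | (fun u : rowSet s i => φ u.val) v = true}.ncard)
      (fun u : rowSet s i => φ u.val) rfl (by
        intro K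
        have h := h3 i K
        convert h using 2
        ext u; simp [SimpleGraph.ConnectedComponent.mem_supp_iff])
  refine ⟨S.image (Sym2.map Subtype.val), ?_, ?_⟩
  · intro e he
    simp only [Finset.mem_image] at he
    obtain ⟨e', he', rfl⟩ := he
    revert he'
    refine Sym2.ind (fun a b hab => ?_) e'
    have hadj : (R.induce (rowSet s i)).Adj a b := (R.induce (rowSet s i)).mem_edgeSet.mp
      (hSsub (Finset.mem_coe.mpr hab))
    have hR : R.Adj a.val b.val := by
      simpa [SimpleGraph.comap_adj] using hadj
    constructor
    · rw [Sym2.map_pair_eq]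
      exact R.mem_edgeSet.mpr hR
    · intro x hx
      rw [Sym2.map_pair_eq, Sym2.mem_iff] at hx
      rcases hx with rfl | rfl
      · exact a.2
      · exact b.2
  · intro j
    have hmem : ((i, j) : Fin 3 × Fin s) ∈ rowSet s i := rfl
    have h1 : ((S.image (Sym2.map Subtype.val)).filter (fun e => ((i, j) : Fin 3 × Fin s) ∈ e))
        = (S.filter (fun e' => ((i, j) : Fin 3 × Fin s) ∈ Sym2.map Subtype.val e')).image
            (Sym2.map Subtype.val) := Finset.filter_image
    have h2 : S.filter (fun e' => ((i, j) : Fin 3 × Fin s) ∈ Sym2.map Subtype.val e')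
        = S.filter (fun e' => (⟨(i, j), hmem⟩ : rowSet s i) ∈ e') := by
      apply Finset.filter_congr
      intro e' _
      simp only [Sym2.mem_map, eq_iff_iff]
      constructor
      · rintro ⟨a, ha, hav⟩
        rwa [show (⟨(i, j), hmem⟩ : rowSet s i) = a from Subtype.ext hav.symm]
      · intro h
        exact ⟨_, h, rfl⟩
    rw [h1, Finset.card_image_of_injective _ (Sym2.map.injective Subtype.val_injective), h2]
    exact hSdeg ⟨(i, j), hmem⟩

/-- If `R` (with `R_C` eulerian) has a symmetric parity-coloring, then the row
coloring `f (i, j) = i` extends to an amiable coloring of `R`. -/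

theorem stmt12 {s : ℕ} (R : SimpleGraph (Fin 3 × Fin s))
    (hcol : ColIndep R) (heul : EulerianRC R)
    (φ : Fin 3 × Fin s → Bool) (hφ : SymParity R φ) :
    ∃ g : Sym2 (Fin 3 × Fin s) → Fin 3, Amiable R (fun v => v.1) g := by
  classical
  obtain ⟨hp1', hp2', h3⟩ := hφ
  have hp1 : ∀ j, (φ (0, j) = φ (1, j)) ↔ Even (dRows R 0 1 (0, j) + nRow R 0 (1, j)) := hp1'
  have hp2 : ∀ j, (φ (1, j) = φ (2, j)) ↔ Even (dRows R 1 2 (1, j) + nRow R 1 (2, j)) := hp2'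
  choose S' hS'edge hS'deg using exists_rowjoin R φ h3
  set hfun : Fin 3 × Fin s → Fin 3 × Fin s → Fin 3 := fun v w =>
    if v.1 = w.1 then (if s(v, w) ∈ S' v.1 then v.1 + 1 else v.1 + 2)
    else -(v.1 + w.1) with hfdef
  have hsym : ∀ v w, hfun v w = hfun w v := by
    intro v w
    by_cases h : v.1 = w.1
    · simp only [hfdef, h, if_pos rfl, Sym2.eq_swap]
    · simp only [hfdef, if_neg h, if_neg (Ne.symm h), add_comm]
  set g : Sym2 (Fin 3 × Fin s) → Fin 3 := Sym2.lift ⟨hfun, hsym⟩ with hgdef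
  have hgmk : ∀ v w, g s(v, w) = hfun v w := fun v w => Sym2.lift_mk _ v w
  -- X and Y counts
  set X : Fin 3 → Fin s → ℕ := fun i j =>
    ((S' i).filter (fun e => ((i, j) : Fin 3 × Fin s) ∈ e)).card with hXdef
  set Y : Fin 3 → Fin s → ℕ := fun i j =>
    {w | R.Adj (i, j) w ∧ w.1 = i ∧ s(((i, j) : Fin 3 × Fin s), w) ∉ S' i}.ncard with hYdef
  -- the incidence count
  have hX : ∀ i j, {w | R.Adj (i, j) w ∧ w.1 = i ∧ s(((i, j) : Fin 3 × Fin s), w) ∈ S' i}.ncard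
      = X i j := by
    intro i j
    have hset : {w | R.Adj (i, j) w ∧ w.1 = i ∧ s(((i, j) : Fin 3 × Fin s), w) ∈ S' i}
        = {w | s(((i, j) : Fin 3 × Fin s), w) ∈ S' i} := by
      ext w
      simp only [Set.mem_setOf_eq]
      constructor
      · exact fun h => h.2.2
      · intro h
        obtain ⟨hedge, hrow⟩ := hS'edge i _ h
        exact ⟨R.mem_edgeSet.mp hedge, hrow w (Sym2.mem_mk_right _ _), h⟩
    rw [hset, ncard_incidence]
  -- master part lemma
  have hne12 : ∀ a : Fin 3, a + 2 ≠ a + 1 := by decide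
  have hne21 : ∀ a : Fin 3, a + 1 ≠ a + 2 := by decide
  have hpart : ∀ (i k c : Fin 3) (j : Fin s),
      {w | R.Adj (i, j) w ∧ w.1 = k ∧ g s(((i, j) : Fin 3 × Fin s), w) = c}.ncard =
      if i = k then (if c = i + 1 then X i j else if c = i + 2 then Y i j else 0)
      else (if c = -(i + k) then nRow R k (i, j) else 0) := by
    intro i k c j
    by_cases hik : i = k
    · subst hik
      rw [if_pos rfl]
      have hg' : ∀ w : Fin 3 × Fin s, w.1 = i →
          g s(((i, j) : Fin 3 × Fin s), w)
            = (if s(((i, j) : Fin 3 × Fin s), w) ∈ S' i then i + 1 else i + 2) := by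
        intro w hw
        rw [hgmk]
        simp only [hfdef]
        rw [if_pos (by simp [hw])]
      by_cases hc1 : c = i + 1
      · rw [if_pos hc1, ← hX i j]
        congr 1
        ext w
        simp only [Set.mem_setOf_eq]
        constructor
        · rintro ⟨h1, h2, h3⟩
          refine ⟨h1, h2, ?_⟩
          rw [hg' w h2] at h3
          by_contra hmem
          rw [if_neg hmem] at h3
          rw [hc1] at h3
          exact hne12 i h3
        · rintro ⟨h1, h2, h3⟩
          exact ⟨h1, h2, by rw [hg' w h2, if_pos h3, hc1]⟩
      · rw [if_neg hc1]
        by_cases hc2 : c = i + 2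
        · rw [if_pos hc2, hYdef]
          congr 1
          ext w
          simp only [Set.mem_setOf_eq]
          constructor
          · rintro ⟨h1, h2, h3⟩
            refine ⟨h1, h2, ?_⟩
            rw [hg' w h2] at h3
            intro hmem
            rw [if_pos hmem, hc2] at h3
            exact hne21 i h3
          · rintro ⟨h1, h2, h3⟩
            exact ⟨h1, h2, by rw [hg' w h2, if_neg h3, hc2]⟩
        · rw [if_neg hc2]
          have : {w | R.Adj (i, j) w ∧ w.1 = i ∧ g s(((i, j) : Fin 3 × Fin s), w) = c} = ∅ := by
            ext w
            simp only [Set.mem_setOf_eq, Set.mem_empty_iff_false, iff_false, not_and]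
            intro h1 h2 h3
            rw [hg' w h2] at h3
            by_cases hmem : s(((i, j) : Fin 3 × Fin s), w) ∈ S' i
            · rw [if_pos hmem] at h3; exact hc1 h3.symm
            · rw [if_neg hmem] at h3; exact hc2 h3.symm
          rw [this, Set.ncard_empty]
    · rw [if_neg hik]
      have hg' : ∀ w : Fin 3 × Fin s, w.1 = k →
          g s(((i, j) : Fin 3 × Fin s), w) = -(i + k) := by
        intro w hw
        rw [hgmk]
        simp only [hfdef]
        rw [if_neg (by simp [hw]; exact hik), hw]
      by_cases hc : c = -(i + k)
      · rw [if_pos hc]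
        have : {w | R.Adj (i, j) w ∧ w.1 = k ∧ g s(((i, j) : Fin 3 × Fin s), w) = c}
            = {w | R.Adj (i, j) w ∧ w.1 = k} := by
          ext w
          simp only [Set.mem_setOf_eq]
          exact ⟨fun ⟨h1, h2, _⟩ => ⟨h1, h2⟩, fun ⟨h1, h2⟩ => ⟨h1, h2, by rw [hg' w h2, hc]⟩⟩
        rw [this]; rfl
      · rw [if_neg hc]
        have : {w | R.Adj (i, j) w ∧ w.1 = k ∧ g s(((i, j) : Fin 3 × Fin s), w) = c} = ∅ := by
          ext w
          simp only [Set.mem_setOf_eq, Set.mem_empty_iff_false, iff_false, not_and]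
          intro h1 h2 h3
          rw [hg' w h2] at h3
          exact hc h3.symm
        rw [this, Set.ncard_empty]
  -- split of dColor by rows
  have htri : ∀ a : Fin 3, a = 0 ∨ a = 1 ∨ a = 2 := by decide
  have hsplit : ∀ (c i : Fin 3) (j : Fin s), dColor R g c (i, j) =
      {w | R.Adj (i, j) w ∧ w.1 = 0 ∧ g s(((i, j) : Fin 3 × Fin s), w) = c}.ncard +
      {w | R.Adj (i, j) w ∧ w.1 = 1 ∧ g s(((i, j) : Fin 3 × Fin s), w) = c}.ncard +
      {w | R.Adj (i, j) w ∧ w.1 = 2 ∧ g s(((i, j) : Fin 3 × Fin s), w) = c}.ncard := by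
    intro c i j
    have hU : {w | R.Adj (i, j) w ∧ g s(((i, j) : Fin 3 × Fin s), w) = c} =
        ({w | R.Adj (i, j) w ∧ w.1 = 0 ∧ g s(((i, j) : Fin 3 × Fin s), w) = c} ∪
         {w | R.Adj (i, j) w ∧ w.1 = 1 ∧ g s(((i, j) : Fin 3 × Fin s), w) = c}) ∪
        {w | R.Adj (i, j) w ∧ w.1 = 2 ∧ g s(((i, j) : Fin 3 × Fin s), w) = c} := by
      ext w
      simp only [Set.mem_setOf_eq, Set.mem_union]
      rcases htri w.1 with h | h | h <;> simp [h] <;> tauto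
    have hd1 : Disjoint {w : Fin 3 × Fin s | R.Adj (i, j) w ∧ w.1 = 0 ∧ g s(((i, j) : Fin 3 × Fin s), w) = c}
        {w | R.Adj (i, j) w ∧ w.1 = 1 ∧ g s(((i, j) : Fin 3 × Fin s), w) = c} := by
      rw [Set.disjoint_left]
      rintro w ⟨_, h0, _⟩ ⟨_, h1, _⟩
      rw [h0] at h1; exact absurd h1 (by decide)
    have hd2 : Disjoint ({w : Fin 3 × Fin s | R.Adj (i, j) w ∧ w.1 = 0 ∧ g s(((i, j) : Fin 3 × Fin s), w) = c} ∪
        {w | R.Adj (i, j) w ∧ w.1 = 1 ∧ g s(((i, j) : Fin 3 × Fin s), w) = c})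
        {w | R.Adj (i, j) w ∧ w.1 = 2 ∧ g s(((i, j) : Fin 3 × Fin s), w) = c} := by
      rw [Set.disjoint_left]
      rintro w (⟨_, h0, _⟩ | ⟨_, h0, _⟩) ⟨_, h2, _⟩ <;>
        (rw [h0] at h2; exact absurd h2 (by decide))
    show {w | R.Adj (i, j) w ∧ g s(((i, j) : Fin 3 × Fin s), w) = c}.ncard = _
    rw [hU, Set.ncard_union_eq hd2 (Set.toFinite _) (Set.toFinite _),
      Set.ncard_union_eq hd1 (Set.toFinite _) (Set.toFinite _)]
  -- degree splits
  have hxy : ∀ (i : Fin 3) (j : Fin s), X i j + Y i j = nRow R i (i, j) := by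
    intro i j
    have hU : {w : Fin 3 × Fin s | R.Adj (i, j) w ∧ w.1 = i} =
        {w | R.Adj (i, j) w ∧ w.1 = i ∧ s(((i, j) : Fin 3 × Fin s), w) ∈ S' i} ∪
        {w | R.Adj (i, j) w ∧ w.1 = i ∧ s(((i, j) : Fin 3 × Fin s), w) ∉ S' i} := by
      ext w
      simp only [Set.mem_setOf_eq, Set.mem_union]
      by_cases hm : s(((i, j) : Fin 3 × Fin s), w) ∈ S' i <;> simp [hm] <;> tauto
    have hd : Disjoint {w : Fin 3 × Fin s | R.Adj (i, j) w ∧ w.1 = i ∧ s(((i, j) : Fin 3 × Fin s), w) ∈ S' i}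
        {w | R.Adj (i, j) w ∧ w.1 = i ∧ s(((i, j) : Fin 3 × Fin s), w) ∉ S' i} := by
      rw [Set.disjoint_left]
      rintro w ⟨_, _, hm⟩ ⟨_, _, hm'⟩
      exact hm' hm
    show _ = {w : Fin 3 × Fin s | R.Adj (i, j) w ∧ w.1 = i}.ncard
    rw [hU, Set.ncard_union_eq hd (Set.toFinite _) (Set.toFinite _), hX i j]
  have hnRowSplit : ∀ (v : Fin 3 × Fin s), ∀ A : Set (Fin 3 × Fin s), A = R.neighborSet v →
      A.ncard = nRow R 0 v + nRow R 1 v + nRow R 2 v := by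
    intro v A hA
    subst hA
    have hU : R.neighborSet v = ({w | R.Adj v w ∧ w.1 = 0} ∪ {w | R.Adj v w ∧ w.1 = 1}) ∪
        {w | R.Adj v w ∧ w.1 = 2} := by
      ext w
      simp only [SimpleGraph.mem_neighborSet, Set.mem_union, Set.mem_setOf_eq]
      rcases htri w.1 with h | h | h <;> simp [h]
    have hd1 : Disjoint {w : Fin 3 × Fin s | R.Adj v w ∧ w.1 = 0} {w | R.Adj v w ∧ w.1 = 1} := by
      rw [Set.disjoint_left]
      rintro w ⟨_, h0⟩ ⟨_, h1⟩
      rw [h0] at h1; exact absurd h1 (by decide)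
    have hd2 : Disjoint ({w : Fin 3 × Fin s | R.Adj v w ∧ w.1 = 0} ∪ {w | R.Adj v w ∧ w.1 = 1})
        {w | R.Adj v w ∧ w.1 = 2} := by
      rw [Set.disjoint_left]
      rintro w (⟨_, h0⟩ | ⟨_, h0⟩) ⟨_, h2⟩ <;> (rw [h0] at h2; exact absurd h2 (by decide))
    rw [hU, Set.ncard_union_eq hd2 (Set.toFinite _) (Set.toFinite _),
      Set.ncard_union_eq hd1 (Set.toFinite _) (Set.toFinite _)]
    rfl
  have hdRowsSplit : ∀ (a b : Fin 3) (v : Fin 3 × Fin s), a ≠ b →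
      dRows R a b v = nRow R a v + nRow R b v := by
    intro a b v hab
    have hU : {w : Fin 3 × Fin s | R.Adj v w ∧ (w.1 = a ∨ w.1 = b)} =
        {w | R.Adj v w ∧ w.1 = a} ∪ {w | R.Adj v w ∧ w.1 = b} := by
      ext w
      simp only [Set.mem_setOf_eq, Set.mem_union]
      tauto
    have hd : Disjoint {w : Fin 3 × Fin s | R.Adj v w ∧ w.1 = a} {w | R.Adj v w ∧ w.1 = b} := by
      rw [Set.disjoint_left]
      rintro w ⟨_, h0⟩ ⟨_, h1⟩
      rw [h0] at h1; exact hab h1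
    show {w : Fin 3 × Fin s | R.Adj v w ∧ (w.1 = a ∨ w.1 = b)}.ncard = _
    rw [hU, Set.ncard_union_eq hd (Set.toFinite _) (Set.toFinite _)]
    rfl
  -- now the amiable coloring
  refine ⟨g, fun j a b h => ?_, fun v w hadj => ?_, fun c j => ?_⟩
  · exact h
  · show v.1 ≠ g s(v, w)
    rw [hgmk]
    simp only [hfdef]
    by_cases h : v.1 = w.1
    · rw [if_pos h]
      have hd : ∀ a : Fin 3, a ≠ a + 1 ∧ a ≠ a + 2 := by decide
      split_ifs with hm
      · exact (hd v.1).1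
      · exact (hd v.1).2
    · rw [if_neg h]
      have hd : ∀ a b : Fin 3, a ≠ b → a ≠ -(a + b) := by decide
      exact hd v.1 w.1 h
  have hx0 : Odd (X 0 j) ↔ φ (0, j) = true := hS'deg 0 j
  have hx1 : Odd (X 1 j) ↔ φ (1, j) = true := hS'deg 1 j
  have hx2 : Odd (X 2 j) ↔ φ (2, j) = true := hS'deg 2 j
  rw [Nat.odd_iff] at hx0 hx1 hx2
  have hxy0 := hxy 0 j
  have hxy1 := hxy 1 j
  have hxy2 := hxy 2 j
  have hP1 := hp1 j
  have hP2 := hp2 j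
  rw [hdRowsSplit 0 1 _ (by decide)] at hP1
  rw [hdRowsSplit 1 2 _ (by decide)] at hP2
  have hE := heul j
  rw [hnRowSplit (0, j) _ rfl, hnRowSplit (1, j) _ rfl, hnRowSplit (2, j) _ rfl] at hE
  rw [Nat.even_iff] at hP1 hP2 hE
  have hg1 : (-(0 + 1) : Fin 3) = 2 := by decide
  have hg2 : (-(0 + 2) : Fin 3) = 1 := by decide
  have hg3 : (-(1 + 0) : Fin 3) = 2 := by decide
  have hg4 : (-(1 + 2) : Fin 3) = 0 := by decide
  have hg5 : (-(2 + 0) : Fin 3) = 1 := by decide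
  have hg6 : (-(2 + 1) : Fin 3) = 0 := by decide
  rcases htri c with rfl | rfl | rfl <;>
    rw [hsplit, hsplit, hsplit] <;>
    simp only [hpart, hg1, hg2, hg3, hg4, hg5, hg6] <;>
    simp <;>
    rw [Nat.even_iff] <;>
    rcases hb0 : φ (0, j) <;> rcases hb1 : φ (1, j) <;> rcases hb2 : φ (2, j) <;>
    simp only [hb0, hb1, hb2, Bool.true_eq_false, Bool.false_eq_true, false_iff, true_iff,
      iff_true, iff_false] at hP1 hP2 hx0 hx1 hx2 <;>
    omega
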